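/- arXiv:2511.11246 — 2 statements merged into one kernel-verified Lean document; each statement's English description precedes it below -/
import Mathlib

section
/- Let f : ℝ → ℝ be continuous with f(s) = c for all s ≤ 0 (c a constant), and let Ψ be a non-negative integrable kernel supported in [θ, L] with 0 < θ < L and ∫Ψ = 1. Then for every t ≥ 0, ∫_0^t ∫_θ^L (f(s) - f(s-τ)) Ψ(τ) dτ ds = ∫_θ^L Ψ(τ) (∫_{t-τ}^t f(s) ds) dτ - c ∫_θ^L Ψ(τ) τ dτ. -/
open MeasureTheory intervalIntegral

theorem stmt_6 (f Ψ : ℝ → ℝ) (c θ L : ℝ) (hθ : 0 < θ) (hθL : θ < L)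
    (hfc : Continuous f) (hhist : ∀ s ≤ (0:ℝ), f s = c)
    (hΨi : Integrable Ψ) (hΨ0 : ∀ τ, 0 ≤ Ψ τ)
    (hΨs : ∀ τ, τ ∉ Set.Icc θ L → Ψ τ = 0)
    (hΨ1 : ∫ τ : ℝ, Ψ τ = 1) :
    ∀ t ≥ (0:ℝ),
      (∫ s in (0:ℝ)..t, ∫ τ in θ..L, (f s - f (s - τ)) * Ψ τ)
        = (∫ τ in θ..L, Ψ τ * ∫ s in (t - τ)..t, f s)
          - c * ∫ τ in θ..L, Ψ τ * τ := by
  intro t ht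
  have hθL' : θ ≤ L := hθL.le
  set μ := volume.restrict (Set.Ioc (0:ℝ) t)
  set ν := volume.restrict (Set.Ioc θ L)
  have hμfin : IsFiniteMeasure μ := ⟨by simp [μ, Measure.restrict_apply_univ]⟩
  have hG : Continuous (fun p : ℝ × ℝ => f p.1 - f (p.1 - p.2)) :=
    (hfc.comp continuous_fst).sub (hfc.comp (continuous_fst.sub continuous_snd))
  -- integrability on product
  have hΨν : Integrable Ψ ν := hΨi.restrict
  have hint : Integrable (fun p : ℝ × ℝ => (f p.1 - f (p.1 - p.2)) * Ψ p.2) (μ.prod ν) := by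
    have h1 : Integrable (fun p : ℝ × ℝ => Ψ p.2) (μ.prod ν) := by
      have := (integrable_const (1:ℝ) (μ := μ)).mul_prod hΨν
      simpa using this
    obtain ⟨C, hC⟩ := (IsCompact.exists_bound_of_continuousOn
      ((isCompact_Icc (a := (0:ℝ)) (b := t)).prod (isCompact_Icc (a := θ) (b := L)))
      hG.continuousOn)
    refine h1.bdd_mul (c := C) (hG.aestronglyMeasurable) ?_
    have hmem : ∀ᵐ p ∂(μ.prod ν), p ∈ Set.Ioc (0:ℝ) t ×ˢ Set.Ioc θ L := by
      rw [Measure.prod_restrict]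
      exact ae_restrict_mem (measurableSet_Ioc.prod measurableSet_Ioc)
    filter_upwards [hmem] with p hp
    exact hC p ⟨Set.Ioc_subset_Icc_self hp.1, Set.Ioc_subset_Icc_self hp.2⟩
  -- swap
  have hswap : (∫ s in (0:ℝ)..t, ∫ τ in θ..L, (f s - f (s - τ)) * Ψ τ)
      = ∫ τ in θ..L, ∫ s in (0:ℝ)..t, (f s - f (s - τ)) * Ψ τ := by
    rw [intervalIntegral.integral_of_le ht]
    rw [intervalIntegral.integral_of_le hθL']
    simp_rw [intervalIntegral.integral_of_le ht, intervalIntegral.integral_of_le hθL']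
    exact MeasureTheory.integral_integral_swap hint
  rw [hswap]
  -- pointwise inner computation
  have key : Set.EqOn (fun τ => ∫ s in (0:ℝ)..t, (f s - f (s - τ)) * Ψ τ)
      (fun τ => Ψ τ * (∫ s in (t - τ)..t, f s) - c * (Ψ τ * τ)) (Set.uIcc θ L) := by
    intro τ hτ
    rw [Set.uIcc_of_le hθL'] at hτ
    have hτ0 : 0 < τ := lt_of_lt_of_le hθ hτ.1
    have hInt : ∀ a b : ℝ, IntervalIntegrable f volume a b := fun a b =>
      hfc.intervalIntegrable a b
    have hInt2 : IntervalIntegrable (fun s => f (s - τ)) volume 0 t :=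
      (hfc.comp (continuous_id.sub continuous_const)).intervalIntegrable 0 t
    simp only
    rw [intervalIntegral.integral_mul_const,
      intervalIntegral.integral_sub (hInt 0 t) hInt2,
      intervalIntegral.integral_comp_sub_right f τ]
    have h1 : (∫ s in (0:ℝ)..t, f s) = (∫ s in (0:ℝ)..(t - τ), f s) + ∫ s in (t-τ)..t, f s :=
      (intervalIntegral.integral_add_adjacent_intervals (hInt 0 (t-τ)) (hInt (t-τ) t)).symm
    have h2 : (∫ s in (0-τ)..(t - τ), f s)
        = (∫ s in (0-τ)..(0:ℝ), f s) + ∫ s in (0:ℝ)..(t-τ), f s :=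
      (intervalIntegral.integral_add_adjacent_intervals (hInt (0-τ) 0) (hInt 0 (t-τ))).symm
    have h3 : (∫ s in (0-τ)..(0:ℝ), f s) = c * τ := by
      rw [intervalIntegral.integral_congr (g := fun _ => c)
        (fun s hs => by
          apply hhist
          rcases hs with hs
          rw [Set.uIcc_of_le (by linarith : 0 - τ ≤ (0:ℝ))] at hs
          exact hs.2)]
      simp [intervalIntegral.integral_const]
      ring
    rw [h1, h2, h3]
    ring
  rw [intervalIntegral.integral_congr key]
  -- final linearity
  have hcont : Continuous fun τ : ℝ => ∫ s in (t - τ)..t, f s := by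
    have hF : Continuous fun x : ℝ => ∫ s in (0:ℝ)..x, f s :=
      intervalIntegral.continuous_primitive (fun a b => hfc.intervalIntegrable a b) 0
    have : ∀ τ : ℝ, (∫ s in (t - τ)..t, f s)
        = (∫ s in (0:ℝ)..t, f s) - ∫ s in (0:ℝ)..(t - τ), f s := fun τ =>
      (intervalIntegral.integral_interval_sub_left (hfc.intervalIntegrable 0 t)
        (hfc.intervalIntegrable 0 (t - τ))).symm
    simp_rw [this]
    exact continuous_const.sub (hF.comp (continuous_const.sub continuous_id))
  have hi1 : IntervalIntegrable (fun τ => Ψ τ * ∫ s in (t - τ)..t, f s) volume θ L :=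
    hΨi.intervalIntegrable.mul_continuousOn hcont.continuousOn
  have hi2 : IntervalIntegrable (fun τ => c * (Ψ τ * τ)) volume θ L := by
    have : IntervalIntegrable (fun τ => Ψ τ * τ) volume θ L :=
      hΨi.intervalIntegrable.mul_continuousOn continuous_id.continuousOn
    exact (this.const_mul c)
  rw [intervalIntegral.integral_sub hi1 hi2, intervalIntegral.integral_const_mul]
end

section
/- Let f : ℝ → ℝ be continuous and non-negative with f(s) = c > 0 for s ≤ 0, and let Ψ be a non-negative integrable kernel supported in [θ,L] (0 < θ < L) with total mass 1. Define E(t) = c·∫_θ^L Ψ(τ)τ dτ + ∫_0^t ∫_θ^L (f(s) - f(s-τ))Ψ(τ) dτ ds. Then E(t) = ∫_θ^L Ψ(τ)(∫_{t-τ}^t f(s) ds) dτ ≥ 0 for all t ≥ 0. -/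
open MeasureTheory intervalIntegral

theorem stmt_7 (f Ψ : ℝ → ℝ) (c θ L : ℝ) (hθ : 0 < θ) (hθL : θ < L)
    (hc : 0 < c) (hfc : Continuous f) (hf0 : ∀ s, 0 ≤ f s)
    (hhist : ∀ s ≤ (0:ℝ), f s = c)
    (hΨi : Integrable Ψ) (hΨ0 : ∀ τ, 0 ≤ Ψ τ)
    (hΨs : ∀ τ, τ ∉ Set.Icc θ L → Ψ τ = 0)
    (hΨ1 : ∫ τ : ℝ, Ψ τ = 1) :
    ∀ t ≥ (0:ℝ),
      (c * (∫ τ in θ..L, Ψ τ * τ)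
          + ∫ s in (0:ℝ)..t, ∫ τ in θ..L, (f s - f (s - τ)) * Ψ τ)
        = (∫ τ in θ..L, Ψ τ * ∫ s in (t - τ)..t, f s) ∧
      0 ≤ c * (∫ τ in θ..L, Ψ τ * τ)
          + ∫ s in (0:ℝ)..t, ∫ τ in θ..L, (f s - f (s - τ)) * Ψ τ := by
  intro t ht
  have hθL' : θ ≤ L := hθL.le
  have hfI : ∀ a b : ℝ, IntervalIntegrable f volume a b :=
    fun a b => hfc.intervalIntegrable a b
  -- bound for f on [-L, t]
  obtain ⟨C, hC⟩ : ∃ C, ∀ x ∈ Set.Icc (-L) t, ‖f x‖ ≤ C :=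
    (isCompact_Icc (a := -L) (b := t)).exists_bound_of_continuousOn hfc.continuousOn
  have hC0 : 0 ≤ C := le_trans (norm_nonneg _) (hC 0 ⟨by linarith, ht⟩)
  -- continuity of τ ↦ ∫_{t-τ}^t f
  have hFcont : Continuous fun τ : ℝ => ∫ s in (t - τ)..t, f s := by
    have h1 : Continuous fun x : ℝ => ∫ s in (0:ℝ)..x, f s :=
      intervalIntegral.continuous_primitive hfI 0
    have key : ∀ τ : ℝ, (∫ s in (t - τ)..t, f s)
        = (∫ s in (0:ℝ)..t, f s) - ∫ s in (0:ℝ)..(t - τ), f s := by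
      intro τ
      rw [intervalIntegral.integral_interval_sub_left (hfI 0 t) (hfI 0 (t - τ))]
    simp_rw [key]
    exact continuous_const.sub (h1.comp (continuous_const.sub continuous_id))
  -- integrability facts on [θ, L]
  have hΨI : ∀ a b : ℝ, IntervalIntegrable Ψ volume a b :=
    fun a b => hΨi.intervalIntegrable
  have hμfin : IsFiniteMeasure (volume.restrict (Set.Ioc (0:ℝ) t)) :=
    ⟨by rw [Measure.restrict_apply_univ]; exact measure_Ioc_lt_top⟩
  -- Fubini
  have hInt : Integrable (Function.uncurry fun s τ : ℝ => (f s - f (s - τ)) * Ψ τ)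
      ((volume.restrict (Set.Ioc (0:ℝ) t)).prod (volume.restrict (Set.Ioc θ L))) := by
    have hmeas : AEStronglyMeasurable
        (Function.uncurry fun s τ : ℝ => (f s - f (s - τ)) * Ψ τ)
        ((volume.restrict (Set.Ioc (0:ℝ) t)).prod (volume.restrict (Set.Ioc θ L))) := by
      have h1 : Continuous fun z : ℝ × ℝ => f z.1 - f (z.1 - z.2) :=
        (hfc.comp continuous_fst).sub (hfc.comp (continuous_fst.sub continuous_snd))
      have h2 : AEMeasurable (fun z : ℝ × ℝ => Ψ z.2)
          ((volume.restrict (Set.Ioc (0:ℝ) t)).prod (volume.restrict (Set.Ioc θ L))) :=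
        AEMeasurable.comp_snd (hΨi.restrict.aemeasurable)
      exact h1.aestronglyMeasurable.mul h2.aestronglyMeasurable
    have hbnd : Integrable (fun z : ℝ × ℝ => (2 * C) * Ψ z.2)
        ((volume.restrict (Set.Ioc (0:ℝ) t)).prod (volume.restrict (Set.Ioc θ L))) := by
      exact Integrable.mul_prod (integrable_const (2 * C)) hΨi.restrict
    refine hbnd.mono hmeas ?_
    rw [Measure.prod_restrict]
    refine (ae_restrict_iff' (measurableSet_Ioc.prod measurableSet_Ioc)).2
      (Filter.Eventually.of_forall ?_)
    rintro ⟨s, τ⟩ ⟨hs, hτ⟩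
    simp only [Function.uncurry, norm_mul]
    have hfs : ‖f s‖ ≤ C := hC s ⟨by nlinarith [hs.1, hθL, hθ], hs.2⟩
    have hfst : ‖f (s - τ)‖ ≤ C := hC (s - τ)
      ⟨by nlinarith [hs.1, hτ.2], by nlinarith [hs.2, hτ.1, hθ]⟩
    have h1 : ‖f s - f (s - τ)‖ ≤ 2 * C := by
      calc ‖f s - f (s - τ)‖ ≤ ‖f s‖ + ‖f (s - τ)‖ := norm_sub_le _ _
        _ ≤ 2 * C := by linarith
    have h2 : ‖Ψ τ‖ = Ψ τ := Real.norm_of_nonneg (hΨ0 τ)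
    calc ‖f s - f (s - τ)‖ * ‖Ψ τ‖ ≤ (2 * C) * ‖Ψ τ‖ :=
          mul_le_mul_of_nonneg_right h1 (norm_nonneg _)
      _ = ‖(2:ℝ)‖ * ‖C‖ * ‖Ψ τ‖ := by
          rw [show ‖(2:ℝ)‖ = 2 from by norm_num, Real.norm_of_nonneg hC0]
  have hswap :
      (∫ s in (0:ℝ)..t, ∫ τ in θ..L, (f s - f (s - τ)) * Ψ τ)
        = ∫ τ in θ..L, ∫ s in (0:ℝ)..t, (f s - f (s - τ)) * Ψ τ := by
    rw [intervalIntegral.integral_of_le ht, intervalIntegral.integral_of_le hθL']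
    simp_rw [intervalIntegral.integral_of_le ht, intervalIntegral.integral_of_le hθL']
    exact MeasureTheory.integral_integral_swap hInt
  -- inner integral computation, for all τ ≥ 0
  have hinner : ∀ τ : ℝ, 0 ≤ τ →
      (∫ s in (0:ℝ)..t, (f s - f (s - τ)) * Ψ τ)
        = Ψ τ * (∫ s in (t - τ)..t, f s) - c * (Ψ τ * τ) := by
    intro τ hτ0
    have hfτI : ∀ a b : ℝ, IntervalIntegrable (fun s => f (s - τ)) volume a b :=
      fun a b => (hfc.comp (continuous_id.sub continuous_const)).intervalIntegrable a b
    have step1 : (∫ s in (0:ℝ)..t, (f s - f (s - τ)) * Ψ τ)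
        = (∫ s in (0:ℝ)..t, (f s - f (s - τ))) * Ψ τ := by
      rw [← intervalIntegral.integral_mul_const]
    have step2 : (∫ s in (0:ℝ)..t, (f s - f (s - τ)))
        = (∫ s in (0:ℝ)..t, f s) - ∫ s in (0:ℝ)..t, f (s - τ) :=
      intervalIntegral.integral_sub (hfI 0 t) (hfτI 0 t)
    have step3 : (∫ s in (0:ℝ)..t, f (s - τ)) = ∫ s in (0 - τ)..(t - τ), f s :=
      intervalIntegral.integral_comp_sub_right f τ
    have adj1 : (∫ s in (-τ)..(t - τ), f s) + (∫ s in (t - τ)..t, f s)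
        = ∫ s in (-τ)..t, f s :=
      intervalIntegral.integral_add_adjacent_intervals (hfI _ _) (hfI _ _)
    have adj2 : (∫ s in (-τ)..(0:ℝ), f s) + (∫ s in (0:ℝ)..t, f s)
        = ∫ s in (-τ)..t, f s :=
      intervalIntegral.integral_add_adjacent_intervals (hfI _ _) (hfI _ _)
    have hist : (∫ s in (-τ)..(0:ℝ), f s) = c * τ := by
      rw [intervalIntegral.integral_congr (g := fun _ => c) ?_]
      · simp [smul_eq_mul]; ring
      · intro s hs
        rw [Set.uIcc_of_le (by linarith)] at hs
        exact hhist s hs.2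
    rw [step1, step2, step3]
    have : (0:ℝ) - τ = -τ := by ring
    rw [this]
    have : (∫ s in (0:ℝ)..t, f s) - (∫ s in (-τ)..(t - τ), f s)
        = (∫ s in (t - τ)..t, f s) - c * τ := by linarith
    rw [this]; ring
  -- rewrite the τ-integral
  have hmono : ∀ τ ∈ Set.uIcc θ L,
      (∫ s in (0:ℝ)..t, (f s - f (s - τ)) * Ψ τ)
        = Ψ τ * (∫ s in (t - τ)..t, f s) - c * (Ψ τ * τ) := by
    intro τ hτ
    rw [Set.uIcc_of_le hθL'] at hτ
    exact hinner τ (by linarith [hτ.1])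
  -- integrability of the two pieces on [θ, L]
  have hint1 : IntervalIntegrable (fun τ => Ψ τ * (∫ s in (t - τ)..t, f s)) volume θ L := by
    rw [intervalIntegrable_iff_integrableOn_Ioc_of_le hθL']
    have := Integrable.bdd_mul (μ := volume.restrict (Set.Ioc θ L))
      (f := fun τ => ∫ s in (t - τ)..t, f s) (g := Ψ)
      (c := sSup ((fun τ => ‖∫ s in (t - τ)..t, f s‖) '' Set.Icc θ L))
      hΨi.restrict hFcont.aestronglyMeasurable.restrict ?_
    · exact this.congr (Filter.Eventually.of_forall (fun τ => mul_comm _ _))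
    · refine (ae_restrict_iff' measurableSet_Ioc).2 (Filter.Eventually.of_forall ?_)
      intro τ hτ
      refine le_csSup ?_ ⟨τ, ⟨hτ.1.le, hτ.2⟩, rfl⟩
      exact (isCompact_Icc.image_of_continuousOn hFcont.norm.continuousOn).bddAbove
  have hint2 : IntervalIntegrable (fun τ => Ψ τ * τ) volume θ L := by
    rw [intervalIntegrable_iff_integrableOn_Ioc_of_le hθL']
    have := Integrable.bdd_mul (μ := volume.restrict (Set.Ioc θ L))
      (f := fun τ : ℝ => τ) (g := Ψ) (c := max ‖θ‖ ‖L‖)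
      hΨi.restrict continuous_id.aestronglyMeasurable.restrict ?_
    · exact this.congr (Filter.Eventually.of_forall (fun τ => mul_comm _ _))
    · refine (ae_restrict_iff' measurableSet_Ioc).2 (Filter.Eventually.of_forall ?_)
      intro τ hτ
      rw [Real.norm_eq_abs, abs_le]
      constructor
      · have : -max ‖θ‖ ‖L‖ ≤ -‖θ‖ := by
          simp only [neg_le_neg_iff]; exact le_max_left _ _
        refine le_trans this ?_
        rw [Real.norm_eq_abs, abs_of_pos hθ]
        linarith [hτ.1]
      · refine le_trans ?_ (le_max_right _ _)
        rw [Real.norm_eq_abs, abs_of_pos (lt_trans hθ hθL)]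
        exact hτ.2
  have hsplit : (∫ τ in θ..L, (Ψ τ * (∫ s in (t - τ)..t, f s) - c * (Ψ τ * τ)))
      = (∫ τ in θ..L, Ψ τ * (∫ s in (t - τ)..t, f s)) - c * ∫ τ in θ..L, Ψ τ * τ := by
    rw [intervalIntegral.integral_sub hint1 (hint2.const_mul c),
      intervalIntegral.integral_const_mul]
  have hmain : (c * (∫ τ in θ..L, Ψ τ * τ)
      + ∫ s in (0:ℝ)..t, ∫ τ in θ..L, (f s - f (s - τ)) * Ψ τ)
      = ∫ τ in θ..L, Ψ τ * ∫ s in (t - τ)..t, f s := by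
    rw [hswap, intervalIntegral.integral_congr hmono, hsplit]
    ring
  refine ⟨hmain, ?_⟩
  rw [hmain]
  refine intervalIntegral.integral_nonneg hθL' (fun τ hτ => ?_)
  refine mul_nonneg (hΨ0 τ) ?_
  refine intervalIntegral.integral_nonneg (by linarith [hτ.1, hθ]) (fun s _ => hf0 s)
end
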